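/- Let π, ρ ∈ L_CPL each be a conjunction of propositional variables or a disjunction of propositional variables with π ⊨_CPL ρ and ρ ⊭_CPL π, let c, d ∈ [0,1]∩ℚ and ◇, ◇' ∈ {≤,<,>,≥}, and suppose both Pr(π)◇c̄ and Pr(ρ)◇'d̄ are FP-satisfiable and not FP-valid. Then Pr(π)◇c̄ ⊨_FP Pr(ρ)◇'d̄ if and only if ◇, ◇' ∈ {≥,>} and V_Pr(Pr(π)◇c̄) ⊆ V_Pr(Pr(ρ)◇'d̄). -/

import Mathlib

open scoped Classical

/-- Classical propositional formulas (the language `L_CPL`), built from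
propositional variables (indexed by `ℕ`) using ¬, ∧, ∨. -/
inductive CPL where
  | var : ℕ → CPL
  | neg : CPL → CPL
  | and : CPL → CPL → CPL
  | or : CPL → CPL → CPL
deriving DecidableEq

namespace CPL

/-- The set of propositional variables occurring in a formula. -/
def vars : CPL → Finset ℕ
  | var p => {p}
  | neg φ => vars φ
  | and φ χ => vars φ ∪ vars χ
  | or φ χ => vars φ ∪ vars χ

/-- Classical evaluation of a formula under a Boolean valuation. -/
def eval (v : ℕ → Bool) : CPL → Bool
  | var p => v p
  | neg φ => !eval v φ
  | and φ χ => eval v φ && eval v χ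
  | or φ χ => eval v φ || eval v χ

/-- Evaluation of a formula at a state given as a set of variables:
the variables in `X` are true, all others false. -/
def evalSet (X : Finset ℕ) (φ : CPL) : Bool := eval (fun p => decide (p ∈ X)) φ

/-- CPL-satisfiability. -/
def Satisfiable (φ : CPL) : Prop := ∃ v, eval v φ = true

/-- CPL-validity. -/
def Valid (φ : CPL) : Prop := ∀ v, eval v φ = true

/-- Classical entailment `φ ⊨_CPL χ`. -/
def Entails (φ χ : CPL) : Prop := ∀ v, eval v φ = true → eval v χ = true

/-- A literal: a variable or a negated variable. -/
def IsLiteral (φ : CPL) : Prop := (∃ p, φ = var p) ∨ ∃ p, φ = neg (var p)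

/-- An `L_CPL`-term: a conjunction of literals. -/
inductive IsTerm : CPL → Prop
  | lit {φ} : IsLiteral φ → IsTerm φ
  | conj {φ χ} : IsTerm φ → IsTerm χ → IsTerm (and φ χ)

/-- A conjunction of propositional variables. -/
inductive IsConjVars : CPL → Prop
  | var (p : ℕ) : IsConjVars (var p)
  | conj {φ χ} : IsConjVars φ → IsConjVars χ → IsConjVars (and φ χ)

/-- A disjunction of propositional variables. -/
inductive IsDisjVars : CPL → Prop
  | var (p : ℕ) : IsDisjVars (var p)
  | disj {φ χ} : IsDisjVars φ → IsDisjVars χ → IsDisjVars (or φ χ)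

/-- Variables occurring as positive literals (in a term). -/
def posVars : CPL → Finset ℕ
  | var p => {p}
  | neg _ => ∅
  | and φ χ => posVars φ ∪ posVars χ
  | or _ _ => ∅

/-- Variables occurring as negated literals (in a term). -/
def negVars : CPL → Finset ℕ
  | var _ => ∅
  | neg (var p) => {p}
  | neg _ => ∅
  | and φ χ => negVars φ ∪ negVars χ
  | or _ _ => ∅

/-- The literals occurring in a term. -/
def lits (φ : CPL) : Finset CPL :=
  (posVars φ).image var ∪ (negVars φ).image (fun p => neg (var p))

end CPL

/-- A state (possible world) over a finite set `V` of variables: a subset of `V`. -/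
abbrev World (V : Finset ℕ) := {X : Finset ℕ // X ⊆ V}

/-- A probabilistic model for `V`: a finitely additive probability measure
`μ : 2^(2^V) → [0,1]`. -/
structure ProbModel (V : Finset ℕ) where
  μ : Set (World V) → ℝ
  nonneg : ∀ A, 0 ≤ μ A
  le_one : ∀ A, μ A ≤ 1
  m_univ : μ Set.univ = 1
  m_empty : μ ∅ = 0
  m_add : ∀ A B : Set (World V), Disjoint A B → μ (A ∪ B) = μ A + μ B

/-- The truth set `‖φ‖_M` of a classical formula in a probabilistic model for `V`. -/
def truthSet (V : Finset ℕ) (φ : CPL) : Set (World V) :=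
  {w | CPL.evalSet w.1 φ = true}

/-- Comparison symbols ◇ ∈ {≤, <, >, ≥}. -/
inductive Ineq where
  | le | lt | gt | ge
deriving DecidableEq

/-- The relation denoted by a comparison symbol. -/
def Ineq.holds : Ineq → ℝ → ℝ → Prop
  | le, x, c => x ≤ c
  | lt, x, c => x < c
  | gt, x, c => x > c
  | ge, x, c => x ≥ c

/-- Formulas of the probabilistic language `L^Q_Pr`, built from probabilistic atoms
`Pr(φ)` and `Pr(φ)◇c̄` using ¬, △, ⊙, ⊕, →. -/
inductive FP where
  | prob : CPL → FP
  | probIneq : CPL → Ineq → ℚ → FP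
  | neg : FP → FP
  | delta : FP → FP
  | conj : FP → FP → FP
  | disj : FP → FP → FP
  | impl : FP → FP → FP
deriving DecidableEq

namespace FP

/-- Well-formedness: all rational constants lie in `[0,1] ∩ ℚ`. -/
def WF : FP → Prop
  | prob _ => True
  | probIneq _ _ c => 0 ≤ c ∧ c ≤ 1
  | neg α => WF α
  | delta α => WF α
  | conj α β => WF α ∧ WF β
  | disj α β => WF α ∧ WF β
  | impl α β => WF α ∧ WF β

/-- The variables of an `L^Q_Pr`-formula. -/
def vars : FP → Finset ℕ
  | prob φ => φ.vars
  | probIneq φ _ _ => φ.vars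
  | neg α => vars α
  | delta α => vars α
  | conj α β => vars α ∪ vars β
  | disj α β => vars α ∪ vars β
  | impl α β => vars α ∪ vars β

/-- The events `E(α)`: the classical formulas occurring in probabilistic atoms of `α`. -/
def events : FP → Finset CPL
  | prob φ => {φ}
  | probIneq φ _ _ => {φ}
  | neg α => events α
  | delta α => events α
  | conj α β => events α ∪ events β
  | disj α β => events α ∪ events β
  | impl α β => events α ∪ events β

/-- The FP-interpretation `I_M` induced by a probabilistic model `M`. -/
noncomputable def interp {V : Finset ℕ} (M : ProbModel V) : FP → ℝ
  | prob φ => M.μ (truthSet V φ)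
  | probIneq φ d c => if d.holds (M.μ (truthSet V φ)) (c : ℝ) then 1 else 0
  | neg α => 1 - interp M α
  | delta α => if interp M α = 1 then 1 else 0
  | conj α β => max 0 (interp M α + interp M β - 1)
  | disj α β => min 1 (interp M α + interp M β)
  | impl α β => min 1 (1 - interp M α + interp M β)

/-- `α` is FP-satisfiable: `I_M(α) = 1` in some probabilistic model for `Var(α)`. -/
def Satisfiable (α : FP) : Prop := ∃ M : ProbModel α.vars, interp M α = 1

/-- `α` is FP-valid: `I_M(α) = 1` in every probabilistic model for `Var(α)`. -/
def Valid (α : FP) : Prop := ∀ M : ProbModel α.vars, interp M α = 1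

/-- `α ⊨_FP β`: `I_M(β) = 1` in every probabilistic model for the variables of
`{α, β}` with `I_M(α) = 1`. -/
def Entails1 (α β : FP) : Prop :=
  ∀ M : ProbModel (α.vars ∪ β.vars), interp M α = 1 → interp M β = 1

/-- The variables of a finite set of `L^Q_Pr`-formulas. -/
def varsSet (Γ : Finset FP) : Finset ℕ := Γ.sup vars

/-- A finite set `Γ` is FP-satisfiable (`Γ ⊭_FP ⊥`): some probabilistic model for
the variables of `Γ` makes every member of `Γ` equal to `1`. -/
def SetSatisfiable (Γ : Finset FP) : Prop :=
  ∃ M : ProbModel (varsSet Γ), ∀ γ ∈ Γ, interp M γ = 1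

/-- `Γ ⊨_FP δ`: every probabilistic model for the variables of `Γ ∪ {δ}` satisfying
all of `Γ` satisfies `δ`. -/
def EntailsFin (Γ : Finset FP) (δ : FP) : Prop :=
  ∀ M : ProbModel (varsSet Γ ∪ δ.vars), (∀ γ ∈ Γ, interp M γ = 1) → interp M δ = 1

/-- `Γ ⊨^cons_FP δ`: `Γ ⊨_FP δ` and `Γ ⊭_FP ⊥`. -/
def ConsEntails (Γ : Finset FP) (δ : FP) : Prop :=
  EntailsFin Γ δ ∧ SetSatisfiable Γ

/-- The set of permitted values `V_Pr(Pr(φ)◇c̄)`. -/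
def permittedValues (φ : CPL) (d : Ineq) (c : ℚ) : Set ℝ :=
  {x | ∃ (V : Finset ℕ) (M : ProbModel V), φ.vars ⊆ V ∧
      interp M (probIneq φ d c) = 1 ∧ M.μ (truthSet V φ) = x}

end FP

/-- Formulas of the Łukasiewicz language `L^Q_Ł`, built from propositional variables
and truth-constant literals `p◇c̄` using ¬, △, ⊙, ⊕, →. -/
inductive Luk where
  | var : ℕ → Luk
  | ineq : ℕ → Ineq → ℚ → Luk
  | neg : Luk → Luk
  | delta : Luk → Luk
  | conj : Luk → Luk → Luk
  | disj : Luk → Luk → Luk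
  | impl : Luk → Luk → Luk
deriving DecidableEq

/-- An Ł-valuation: a function `Var → [0,1]`. -/
structure LukVal where
  v : ℕ → ℝ
  mem : ∀ p, v p ∈ Set.Icc (0 : ℝ) 1

/-- Extension of an Ł-valuation to all `L^Q_Ł`-formulas. -/
noncomputable def LukVal.eval (val : LukVal) : Luk → ℝ
  | .var p => val.v p
  | .ineq p d c => if d.holds (val.v p) (c : ℝ) then 1 else 0
  | .neg φ => 1 - val.eval φ
  | .delta φ => if val.eval φ = 1 then 1 else 0
  | .conj φ χ => max 0 (val.eval φ + val.eval χ - 1)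
  | .disj φ χ => min 1 (val.eval φ + val.eval χ)
  | .impl φ χ => min 1 (1 - val.eval φ + val.eval χ)

namespace Luk

/-- Well-formedness: all rational constants lie in `[0,1] ∩ ℚ`. -/
def WF : Luk → Prop
  | var _ => True
  | ineq _ _ c => 0 ≤ c ∧ c ≤ 1
  | neg φ => WF φ
  | delta φ => WF φ
  | conj φ χ => WF φ ∧ WF χ
  | disj φ χ => WF φ ∧ WF χ
  | impl φ χ => WF φ ∧ WF χ

/-- `Φ ⊨_Ł χ` for a finite set `Φ`. -/
def EntailsFin (Φ : Finset Luk) (χ : Luk) : Prop :=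
  ∀ val : LukVal, (∀ φ ∈ Φ, val.eval φ = 1) → val.eval χ = 1

/-- `φ` is Ł-valid. -/
def ValidL (φ : Luk) : Prop := ∀ val : LukVal, val.eval φ = 1

/-- A set of `L^Q_Ł`-formulas is Ł-satisfiable. -/
def SatisfiableSet (S : Set Luk) : Prop := ∃ val : LukVal, ∀ φ ∈ S, val.eval φ = 1

/-- The probabilistic counterpart `φ^Pr` of a Łukasiewicz formula. -/
def toFP : Luk → FP
  | var p => .prob (.var p)
  | ineq p d c => .probIneq (.var p) d c
  | neg φ => .neg (toFP φ)
  | delta φ => .delta (toFP φ)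
  | conj φ χ => .conj (toFP φ) (toFP χ)
  | disj φ χ => .disj (toFP φ) (toFP χ)
  | impl φ χ => .impl (toFP φ) (toFP χ)

end Luk

namespace FP

/-- The outer counterpart `α^↑` of an `L^Q_Pr`-formula, replacing each atom `Pr(φ)`
by the fresh variable `e φ` (and `Pr(φ)◇c̄` by `(e φ)◇c̄`). -/
def outer (e : CPL → ℕ) : FP → Luk
  | prob φ => .var (e φ)
  | probIneq φ d c => .ineq (e φ) d c
  | neg α => .neg (outer e α)
  | delta α => .delta (outer e α)
  | conj α β => .conj (outer e α) (outer e β)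
  | disj α β => .disj (outer e α) (outer e β)
  | impl α β => .impl (outer e α) (outer e β)

end FP

/-- The ⊙-conjunction of a (nonempty) list of `L^Q_Pr`-formulas. -/
def bigConjFP : List FP → FP
  | [] => .probIneq (.var 0) .ge 0
  | a :: t => t.foldl .conj a

/-- The ∨-disjunction of a (nonempty) list of classical formulas. -/
def bigDisjCPL : List CPL → CPL
  | [] => .var 0
  | a :: t => t.foldl .or a

/-- The PIT `⊙_i Pr(τ_i)≤c̄_i ⊙ ⊙_i Pr(τ_i)≥c̄_i` associated with the list of
pairs `(τ_i, c_i)`. -/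
def completePITFormula (L : List (CPL × ℚ)) : FP :=
  bigConjFP (L.map (fun t => FP.probIneq t.1 .le t.2) ++
             L.map (fun t => FP.probIneq t.1 .ge t.2))

/-- `τ` is an `L_CPL`-term containing, for every `p ∈ V`, exactly one of the
literals `p` and `¬p` (and no other variables). -/
def IsCompleteTermOver (V : Finset ℕ) (τ : CPL) : Prop :=
  CPL.IsTerm τ ∧ τ.vars ⊆ V ∧ ∀ p ∈ V, (p ∈ τ.posVars ↔ p ∉ τ.negVars)

/-- Membership in `𝒱 = {0, 1/n, …, (n−1)/n, 1}`. -/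
def memVSet (n : ℕ) (c : ℚ) : Prop := ∃ k : ℕ, k ≤ n ∧ c = (k : ℚ) / (n : ℚ)

/-- The data `(τ_i, c_i)` of a `⟨V,𝒱⟩`-complete PIT (with `𝒱` given by `n`). -/
def IsCompletePIT (V : Finset ℕ) (n : ℕ) (L : List (CPL × ℚ)) : Prop :=
  (L.map Prod.fst).Nodup ∧
  (∀ t ∈ L, IsCompleteTermOver V t.1 ∧ memVSet n t.2) ∧
  (L.map Prod.snd).sum = 1

/-- A measure is coherent with a value assignment `pr` on the events `E`. -/
def coherent {V : Finset ℕ} (M : ProbModel V) (E : Finset CPL) (pr : CPL → ℚ) : Prop :=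
  ∀ ψ ∈ E, M.μ (truthSet V ψ) = (pr ψ : ℝ)

/-- Conditional probability `Pr_μ(φ | χ) = μ(‖φ∧χ‖)/μ(‖χ‖)`. -/
noncomputable def condProb {V : Finset ℕ} (M : ProbModel V) (φ χ : CPL) : ℝ :=
  M.μ (truthSet V (CPL.and φ χ)) / M.μ (truthSet V χ)

/-- `τ` is a solution to the PrAP `⟨{φ}, χ, H, E, pr⟩`: an `L_CPL`-term composed of
literals from `H` s.t. `φ, τ ⊨_CPL χ` and some probabilistic model coherent with `pr`
gives `μ(‖φ∧τ‖) > 0`. -/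
def IsPrAPSolution (φ χ : CPL) (H E : Finset CPL) (pr : CPL → ℚ) (τ : CPL) : Prop :=
  CPL.IsTerm τ ∧ τ.lits ⊆ H ∧
  (∀ v, CPL.eval v φ = true → CPL.eval v τ = true → CPL.eval v χ = true) ∧
  ∃ M : ProbModel (φ.vars ∪ χ.vars),
    coherent M E pr ∧ 0 < M.μ (truthSet (φ.vars ∪ χ.vars) (CPL.and φ τ))

/-- `τ` is a preferred solution: a solution s.t. for every other solution `σ` there is
a probabilistic model coherent with `pr` with `μ(‖τ‖) ≥ μ(‖σ‖)`. -/
def IsPreferredPrAPSolution (φ χ : CPL) (H E : Finset CPL) (pr : CPL → ℚ) (τ : CPL) : Prop :=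
  IsPrAPSolution φ χ H E pr τ ∧
  ∀ σ, IsPrAPSolution φ χ H E pr σ → σ ≠ τ →
    ∃ M : ProbModel (φ.vars ∪ χ.vars),
      coherent M E pr ∧
      M.μ (truthSet (φ.vars ∪ χ.vars) σ) ≤ M.μ (truthSet (φ.vars ∪ χ.vars) τ)

/-- The FP-counterpart `Ξ_p = {Pr(ψ)≈c̄ : ψ ∈ E, p(ψ) = c}` of a value assignment,
where `Pr(ψ)≈c̄` abbreviates `(Pr(ψ)≥c̄) ⊙ (Pr(ψ)≤c̄)`. -/
def XiP (E : Finset CPL) (pr : CPL → ℚ) : Finset FP :=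
  E.image (fun ψ => FP.conj (FP.probIneq ψ .ge (pr ψ)) (FP.probIneq ψ .le (pr ψ)))

/-- The next weakest PIL `λ^♭_𝒱` of the PIL `Pr(τ)◇(k/n)`. -/
def flatPIL (n : ℕ) (τ : CPL) (d : Ineq) (k : ℕ) : FP :=
  match d with
  | .ge => FP.probIneq τ .gt (((k : ℚ) - 1) / (n : ℚ))
  | .gt => FP.probIneq τ .ge ((k : ℚ) / (n : ℚ))
  | .le => FP.probIneq τ .lt (((k : ℚ) + 1) / (n : ℚ))
  | .lt => FP.probIneq τ .le ((k : ℚ) / (n : ℚ))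

/-- The theory `Ψ_Γ = Γ^↑ ∪ {p_φ → p_χ : φ, χ ∈ E[Γ], φ ⊨_CPL χ}`. -/
def PsiGamma (Γ : Finset FP) (e : CPL → ℕ) : Set Luk :=
  (fun α => FP.outer e α) '' (↑Γ : Set FP) ∪
  {ψ | ∃ φ ∈ Γ.sup FP.events, ∃ χ ∈ Γ.sup FP.events,
        CPL.Entails φ χ ∧ ψ = Luk.impl (.var (e φ)) (.var (e χ))}

/-- The conjunction `hd ∧ ⋀_{q ∈ s} q`. -/
def conjVarsFrom (hd : CPL) (s : Finset ℕ) : CPL :=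
  (s.sort (· ≤ ·)).foldl (fun acc q => CPL.and acc (CPL.var q)) hd
namespace Stmt11Aux

lemma eval_congr (φ : CPL) {v v' : ℕ → Bool} (h : ∀ p ∈ φ.vars, v p = v' p) :
    CPL.eval v φ = CPL.eval v' φ := by
  induction φ with
  | var p => exact h p (by simp [CPL.vars])
  | neg φ ih =>
      simp only [CPL.eval]
      rw [ih (fun p hp => h p hp)]
  | and φ χ ih1 ih2 =>
      simp only [CPL.eval]
      rw [ih1 (fun p hp => h p (Finset.mem_union_left _ hp)),
          ih2 (fun p hp => h p (Finset.mem_union_right _ hp))]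
  | or φ χ ih1 ih2 =>
      simp only [CPL.eval]
      rw [ih1 (fun p hp => h p (Finset.mem_union_left _ hp)),
          ih2 (fun p hp => h p (Finset.mem_union_right _ hp))]

lemma eval_allTrue {φ : CPL} (h : CPL.IsConjVars φ ∨ CPL.IsDisjVars φ) :
    CPL.eval (fun _ => true) φ = true := by
  rcases h with h | h
  · induction h with
    | var p => simp [CPL.eval]
    | conj h1 h2 ih1 ih2 => simp [CPL.eval, ih1, ih2]
  · induction h with
    | var p => simp [CPL.eval]
    | disj h1 h2 ih1 ih2 => simp [CPL.eval, ih1, ih2]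

lemma eval_allFalse {φ : CPL} (h : CPL.IsConjVars φ ∨ CPL.IsDisjVars φ) :
    CPL.eval (fun _ => false) φ = false := by
  rcases h with h | h
  · induction h with
    | var p => simp [CPL.eval]
    | conj h1 h2 ih1 ih2 => simp [CPL.eval, ih1, ih2]
  · induction h with
    | var p => simp [CPL.eval]
    | disj h1 h2 ih1 ih2 => simp [CPL.eval, ih1, ih2]

lemma mu_mono {V : Finset ℕ} (M : ProbModel V) {A B : Set (World V)} (h : A ⊆ B) :
    M.μ A ≤ M.μ B := by
  have hd : Disjoint A (B \ A) := Set.disjoint_sdiff_right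
  have := M.m_add A (B \ A) hd
  rw [Set.union_diff_cancel h] at this
  have := M.nonneg (B \ A)
  linarith

lemma interp_probIneq_eq_one {V : Finset ℕ} (M : ProbModel V) (φ : CPL) (dd : Ineq) (cc : ℚ) :
    FP.interp M (FP.probIneq φ dd cc) = 1 ↔ dd.holds (M.μ (truthSet V φ)) (cc : ℝ) := by
  simp only [FP.interp]
  split_ifs with h
  · simp [h]
  · simp [h]

/-- indicator of a point -/
noncomputable def ind {V : Finset ℕ} (ω : World V) (A : Set (World V)) : ℝ :=
  if ω ∈ A then 1 else 0

lemma ind_nonneg {V : Finset ℕ} (ω : World V) (A : Set (World V)) : 0 ≤ ind ω A := by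
  unfold ind; split_ifs <;> norm_num

lemma ind_le_one {V : Finset ℕ} (ω : World V) (A : Set (World V)) : ind ω A ≤ 1 := by
  unfold ind; split_ifs <;> norm_num

lemma ind_add {V : Finset ℕ} (ω : World V) {A B : Set (World V)} (h : Disjoint A B) :
    ind ω (A ∪ B) = ind ω A + ind ω B := by
  unfold ind
  by_cases hA : ω ∈ A <;> by_cases hB : ω ∈ B
  · exact absurd (Set.disjoint_left.mp h hA) (by exact fun hh => hh hB)
  · simp [hA, hB]
  · simp [hA, hB]
  · simp [hA, hB]

/-- A model concentrating masses `x, y - x, 1 - y` on three worlds. -/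
noncomputable def mkModel {V : Finset ℕ} (ω1 ω2 ω3 : World V) (x y : ℝ)
    (hx : 0 ≤ x) (hxy : x ≤ y) (hy : y ≤ 1) : ProbModel V where
  μ A := x * ind ω1 A + (y - x) * ind ω2 A + (1 - y) * ind ω3 A
  nonneg A := by
    have := ind_nonneg ω1 A; have := ind_nonneg ω2 A; have := ind_nonneg ω3 A
    have h1 : 0 ≤ x * ind ω1 A := mul_nonneg hx (ind_nonneg ω1 A)
    have h2 : 0 ≤ (y - x) * ind ω2 A := mul_nonneg (by linarith) (ind_nonneg ω2 A)
    have h3 : 0 ≤ (1 - y) * ind ω3 A := mul_nonneg (by linarith) (ind_nonneg ω3 A)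
    linarith
  le_one A := by
    have h1 : x * ind ω1 A ≤ x * 1 := mul_le_mul_of_nonneg_left (ind_le_one ω1 A) hx
    have h2 : (y - x) * ind ω2 A ≤ (y - x) * 1 :=
      mul_le_mul_of_nonneg_left (ind_le_one ω2 A) (by linarith)
    have h3 : (1 - y) * ind ω3 A ≤ (1 - y) * 1 :=
      mul_le_mul_of_nonneg_left (ind_le_one ω3 A) (by linarith)
    linarith
  m_univ := by simp [ind]
  m_empty := by simp [ind]
  m_add A B h := by
    simp only [ind_add _ h]; ring

lemma mkModel_mu {V : Finset ℕ} (ω1 ω2 ω3 : World V) (x y : ℝ)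
    (hx : 0 ≤ x) (hxy : x ≤ y) (hy : y ≤ 1) (A : Set (World V)) :
    (mkModel ω1 ω2 ω3 x y hx hxy hy).μ A =
      x * ind ω1 A + (y - x) * ind ω2 A + (1 - y) * ind ω3 A := rfl

lemma mem_truthSet {V : Finset ℕ} (w : World V) (φ : CPL) :
    w ∈ truthSet V φ ↔ CPL.evalSet w.1 φ = true := Iff.rfl

lemma holds_mono {x y : ℝ} {cc : ℝ} {s : Ineq} (hs : s = .ge ∨ s = .gt)
    (h : s.holds x cc) (hxy : x ≤ y) : s.holds y cc := by
  rcases hs with rfl | rfl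
  · exact le_trans h hxy
  · exact lt_of_lt_of_le h hxy

end Stmt11Aux

open Stmt11Aux

/-- For `π, ρ` conjunctions/disjunctions of variables with `π ⊨_CPL ρ`,
`ρ ⊭_CPL π`, and both PILs FP-satisfiable and not FP-valid:
`Pr(π)◇c̄ ⊨_FP Pr(ρ)◇'d̄` iff `◇, ◇' ∈ {≥,>}` and
`V_Pr(Pr(π)◇c̄) ⊆ V_Pr(Pr(ρ)◇'d̄)`. -/
theorem stmt11 (π ρ : CPL)
    (hπ : CPL.IsConjVars π ∨ CPL.IsDisjVars π)
    (hρ : CPL.IsConjVars ρ ∨ CPL.IsDisjVars ρ)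
    (hent : CPL.Entails π ρ) (hnent : ¬ CPL.Entails ρ π)
    (c d : ℚ) (hc0 : 0 ≤ c) (hc1 : c ≤ 1) (hd0 : 0 ≤ d) (hd1 : d ≤ 1)
    (s s' : Ineq)
    (h1 : FP.Satisfiable (FP.probIneq π s c)) (h2 : ¬ FP.Valid (FP.probIneq π s c))
    (h3 : FP.Satisfiable (FP.probIneq ρ s' d)) (h4 : ¬ FP.Valid (FP.probIneq ρ s' d)) :
    FP.Entails1 (FP.probIneq π s c) (FP.probIneq ρ s' d) ↔
      ((s = .ge ∨ s = .gt) ∧ (s' = .ge ∨ s' = .gt) ∧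
        FP.permittedValues π s c ⊆ FP.permittedValues ρ s' d) := by
  classical
  have hπV : π.vars ⊆ π.vars ∪ ρ.vars := Finset.subset_union_left
  have hρV : ρ.vars ⊆ π.vars ∪ ρ.vars := Finset.subset_union_right
  simp only [CPL.Entails, not_forall] at hnent
  obtain ⟨vm, hvmρ, hvmπ⟩ := hnent
  have hvmπ' : CPL.eval vm π = false := by
    cases h : CPL.eval vm π
    · rfl
    · exact absurd h hvmπ
  set V : Finset ℕ := π.vars ∪ ρ.vars with hVdef
  let wT : World V := ⟨V, Finset.Subset.refl V⟩
  let w0 : World V := ⟨∅, Finset.empty_subset V⟩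
  let wM : World V := ⟨V.filter (fun p => vm p = true), Finset.filter_subset _ _⟩
  -- evaluation facts at the three worlds
  have hTπ : CPL.evalSet wT.1 π = true := by
    unfold CPL.evalSet
    rw [eval_congr π (v' := fun _ => true) (fun p hp => by simp [wT, hπV hp])]
    exact eval_allTrue hπ
  have hTρ : CPL.evalSet wT.1 ρ = true := by
    unfold CPL.evalSet
    rw [eval_congr ρ (v' := fun _ => true) (fun p hp => by simp [wT, hρV hp])]
    exact eval_allTrue hρ
  have h0π : CPL.evalSet w0.1 π = false := by
    unfold CPL.evalSet
    rw [eval_congr π (v' := fun _ => false) (fun p hp => by simp [w0])]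
    exact eval_allFalse hπ
  have h0ρ : CPL.evalSet w0.1 ρ = false := by
    unfold CPL.evalSet
    rw [eval_congr ρ (v' := fun _ => false) (fun p hp => by simp [w0])]
    exact eval_allFalse hρ
  have hfilt : ∀ p ∈ V, (decide (p ∈ V.filter (fun q => vm q = true))) = vm p := by
    intro p hpV
    cases hvp : vm p <;> simp [Finset.mem_filter, hpV, hvp]
  have hMπ : CPL.evalSet wM.1 π = false := by
    unfold CPL.evalSet
    rw [eval_congr π (v' := vm) (fun p hp => hfilt p (hπV hp))]
    exact hvmπ'
  have hMρ : CPL.evalSet wM.1 ρ = true := by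
    unfold CPL.evalSet
    rw [eval_congr ρ (v' := vm) (fun p hp => hfilt p (hρV hp))]
    exact hvmρ
  -- key construction: any pair (x, y) with 0 ≤ x ≤ y ≤ 1 is realized
  have key : ∀ x y : ℝ, 0 ≤ x → x ≤ y → y ≤ 1 →
      ∃ M : ProbModel V, M.μ (truthSet V π) = x ∧ M.μ (truthSet V ρ) = y := by
    intro x y hx hxy hy
    refine ⟨mkModel wT wM w0 x y hx hxy hy, ?_, ?_⟩
    · rw [mkModel_mu]
      have i1 : ind wT (truthSet V π) = 1 := if_pos hTπ
      have i2 : ind wM (truthSet V π) = 0 := if_neg (by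
        intro h; rw [(mem_truthSet wM π).mp h] at hMπ; exact Bool.true_eq_false ▸ hMπ)
      have i3 : ind w0 (truthSet V π) = 0 := if_neg (by
        intro h; rw [(mem_truthSet w0 π).mp h] at h0π; exact Bool.true_eq_false ▸ h0π)
      rw [i1, i2, i3]; ring
    · rw [mkModel_mu]
      have i1 : ind wT (truthSet V ρ) = 1 := if_pos hTρ
      have i2 : ind wM (truthSet V ρ) = 1 := if_pos hMρ
      have i3 : ind w0 (truthSet V ρ) = 0 := if_neg (by
        intro h; rw [(mem_truthSet w0 ρ).mp h] at h0ρ; exact Bool.true_eq_false ▸ h0ρ)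
      rw [i1, i2, i3]; ring
  -- satisfiability / non-validity give values in [0,1]
  have sat_bounds : ∀ {φ : CPL} {ss : Ineq} {cc : ℚ}, FP.Satisfiable (FP.probIneq φ ss cc) →
      ∃ x : ℝ, 0 ≤ x ∧ x ≤ 1 ∧ ss.holds x (cc : ℝ) := by
    rintro φ ss cc ⟨M0, hM0⟩
    exact ⟨M0.μ (truthSet _ φ), M0.nonneg _, M0.le_one _,
      (interp_probIneq_eq_one M0 φ ss cc).mp hM0⟩
  have nval : ∀ {φ : CPL} {ss : Ineq} {cc : ℚ}, ¬ FP.Valid (FP.probIneq φ ss cc) →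
      ∃ x : ℝ, 0 ≤ x ∧ x ≤ 1 ∧ ¬ ss.holds x (cc : ℝ) := by
    intro φ ss cc h
    simp only [FP.Valid, not_forall] at h
    obtain ⟨M0, hM0⟩ := h
    exact ⟨M0.μ (truthSet _ φ), M0.nonneg _, M0.le_one _,
      fun hh => hM0 ((interp_probIneq_eq_one M0 φ ss cc).mpr hh)⟩
  obtain ⟨x1, hx10, hx11, hx1⟩ := sat_bounds h1
  obtain ⟨y0, hy00, hy01, hy0⟩ := nval h4
  constructor
  · intro hE
    have hs : s = .ge ∨ s = .gt := by
      cases s with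
      | ge => exact Or.inl rfl
      | gt => exact Or.inr rfl
      | le =>
        exfalso
        have h0c : Ineq.holds .le (0 : ℝ) (c : ℝ) := by
          show (0 : ℝ) ≤ (c : ℝ); exact_mod_cast hc0
        obtain ⟨M, hMπ', hMρ'⟩ := key 0 y0 le_rfl hy00 hy01
        have hI := hE M ((interp_probIneq_eq_one M π .le c).mpr (by rw [hMπ']; exact h0c))
        have := (interp_probIneq_eq_one M ρ s' d).mp hI
        rw [hMρ'] at this
        exact hy0 this
      | lt =>
        exfalso
        have h0c : Ineq.holds .lt (0 : ℝ) (c : ℝ) := lt_of_le_of_lt hx10 hx1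
        obtain ⟨M, hMπ', hMρ'⟩ := key 0 y0 le_rfl hy00 hy01
        have hI := hE M ((interp_probIneq_eq_one M π .lt c).mpr (by rw [hMπ']; exact h0c))
        have := (interp_probIneq_eq_one M ρ s' d).mp hI
        rw [hMρ'] at this
        exact hy0 this
    have hs' : s' = .ge ∨ s' = .gt := by
      cases s' with
      | ge => exact Or.inl rfl
      | gt => exact Or.inr rfl
      | le =>
        exfalso
        have hz0 : 0 ≤ max x1 y0 := le_trans hx10 (le_max_left _ _)
        have hz1 : max x1 y0 ≤ 1 := max_le hx11 hy01
        have hzc : s.holds (max x1 y0) (c : ℝ) := holds_mono hs hx1 (le_max_left _ _)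
        obtain ⟨M, hMπ', hMρ'⟩ := key (max x1 y0) (max x1 y0) hz0 le_rfl hz1
        have hI := hE M ((interp_probIneq_eq_one M π s c).mpr (by rw [hMπ']; exact hzc))
        have := (interp_probIneq_eq_one M ρ .le d).mp hI
        rw [hMρ'] at this
        exact hy0 (le_trans (le_max_right x1 y0) this)
      | lt =>
        exfalso
        have hz0 : 0 ≤ max x1 y0 := le_trans hx10 (le_max_left _ _)
        have hz1 : max x1 y0 ≤ 1 := max_le hx11 hy01
        have hzc : s.holds (max x1 y0) (c : ℝ) := holds_mono hs hx1 (le_max_left _ _)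
        obtain ⟨M, hMπ', hMρ'⟩ := key (max x1 y0) (max x1 y0) hz0 le_rfl hz1
        have hI := hE M ((interp_probIneq_eq_one M π s c).mpr (by rw [hMπ']; exact hzc))
        have := (interp_probIneq_eq_one M ρ .lt d).mp hI
        rw [hMρ'] at this
        exact hy0 (lt_of_le_of_lt (le_max_right x1 y0) this)
    refine ⟨hs, hs', ?_⟩
    intro x hx
    obtain ⟨V', M', hsub', hI', hμ'⟩ := hx
    have hx0 : 0 ≤ x := hμ' ▸ M'.nonneg _
    have hx1' : x ≤ 1 := hμ' ▸ M'.le_one _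
    have hhold : s.holds x (c : ℝ) := by
      have := (interp_probIneq_eq_one M' π s c).mp hI'
      rwa [hμ'] at this
    obtain ⟨M, hMπ', hMρ'⟩ := key x x hx0 le_rfl hx1'
    have hIρ := hE M ((interp_probIneq_eq_one M π s c).mpr (by rw [hMπ']; exact hhold))
    exact ⟨V, M, hρV, hIρ, hMρ'⟩
  · rintro ⟨hs, hs', hsub⟩ M hα
    have hx : s.holds (M.μ (truthSet _ π)) (c : ℝ) := (interp_probIneq_eq_one M π s c).mp hα
    have hmem : M.μ (truthSet _ π) ∈ FP.permittedValues π s c := ⟨_, M, hπV, hα, rfl⟩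
    obtain ⟨V'', M'', hsub'', hI'', hμ''⟩ := hsub hmem
    have hxd : s'.holds (M.μ (truthSet _ π)) (d : ℝ) := by
      have := (interp_probIneq_eq_one M'' ρ s' d).mp hI''
      rwa [hμ''] at this
    have hsubset : truthSet ((FP.probIneq π s c).vars ∪ (FP.probIneq ρ s' d).vars) π ⊆
        truthSet ((FP.probIneq π s c).vars ∪ (FP.probIneq ρ s' d).vars) ρ :=
      fun w hw => hent (fun p => decide (p ∈ w.1)) hw
    have hle := mu_mono M hsubset
    exact (interp_probIneq_eq_one M ρ s' d).mpr (holds_mono hs' hxd hle)
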